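/- If (1/β) > (1/n)·Σ_{i=1}^n |z − z_i|² for all z in a convex open set Ω ⊂ ℝ^d, then the free energy F(·,β) = −(1/β)·log(Σ_i exp(−(β/2)|·−z_i|²)) is convex on Ω. -/

import Mathlib

open Real Finset

lemma free_energy_core {n : ℕ} (hn : 0 < n) {β : ℝ} (hβ : 0 < β)
    (A B : Fin n → ℝ) (C : ℝ) (hC : 0 ≤ C)
    (hCS : ∀ i s, (B i + C * s) ^ 2 ≤ C * (A i + 2 * B i * s + C * s ^ 2))
    (hbound : ∀ s ∈ Set.Icc (0:ℝ) 1,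
      (1 / (n : ℝ)) * ∑ i, (A i + 2 * B i * s + C * s ^ 2) < 1 / β) :
    ConvexOn ℝ (Set.Icc (0:ℝ) 1)
      (fun s => -(1 / β) * log (∑ i, exp (-(β / 2) * (A i + 2 * B i * s + C * s ^ 2)))) := by
  set q : Fin n → ℝ → ℝ := fun i s => A i + 2 * B i * s + C * s ^ 2 with hqdef
  set e : Fin n → ℝ → ℝ := fun i s => exp (-(β / 2) * q i s) with hedef
  set S : ℝ → ℝ := fun s => ∑ i, e i s with hSdef
  set P : Fin n → ℝ → ℝ := fun i s => B i + C * s with hPdef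
  have hSpos : ∀ s, 0 < S s := fun s =>
    Finset.sum_pos (fun i _ => exp_pos _) (univ_nonempty_iff.2 ⟨⟨0, hn⟩⟩)
  -- derivatives of e i
  have he : ∀ i s, HasDerivAt (e i) (-β * P i s * e i s) s := by
    intro i s
    have hq : HasDerivAt (q i) (2 * P i s) s := by
      have : HasDerivAt (fun s => A i + 2 * B i * s + C * s ^ 2)
          (0 + 2 * B i * 1 + C * (2 * s)) s := by
        exact (((hasDerivAt_const s (A i)).add
          (((hasDerivAt_id s).const_mul (2 * B i)))).add
          (((hasDerivAt_pow 2 s)).const_mul C)).congr_deriv (by push_cast; ring_nf)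
      simpa [hPdef] using this.congr_deriv (by ring)
    have := ((hq.const_mul (-(β/2))).exp)
    simpa [hedef] using this.congr_deriv (by ring)
  have hS : ∀ s, HasDerivAt S (∑ i, -β * P i s * e i s) s := fun s =>
    HasDerivAt.fun_sum fun i _ => he i s
  -- second level
  have hS' : ∀ s, HasDerivAt (fun s => ∑ i, -β * P i s * e i s)
      (∑ i, (-β * C + β ^ 2 * P i s ^ 2) * e i s) s := by
    intro s
    refine HasDerivAt.fun_sum fun i _ => ?_
    have hP : HasDerivAt (fun s => -β * P i s) (-β * C) s := by
      have : HasDerivAt (fun s => B i + C * s) C s :=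
        ((hasDerivAt_const s (B i)).add ((hasDerivAt_id s).const_mul C)).congr_deriv
          (by ring)
      simpa [hPdef] using (this.const_mul (-β)).congr_deriv (by ring)
    have := hP.mul (he i s)
    exact this.congr_deriv (by ring)
  set g : ℝ → ℝ := fun s => -(1 / β) * log (S s) with hgdef
  set g' : ℝ → ℝ := fun s => -(1 / β) * ((∑ i, -β * P i s * e i s) / S s) with hg'def
  have hg : ∀ s, HasDerivAt g (g' s) s := fun s =>
    (((hS s).log (hSpos s).ne').const_mul (-(1/β)))
  have hdg : deriv g = g' := funext fun s => (hg s).deriv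
  have hg' : ∀ s, HasDerivAt g'
      (-(1 / β) * (((∑ i, (-β * C + β ^ 2 * P i s ^ 2) * e i s) * S s
        - (∑ i, -β * P i s * e i s) * (∑ i, -β * P i s * e i s)) / S s ^ 2)) s := fun s =>
    (((hS' s).div (hS s) (hSpos s).ne')).const_mul (-(1/β))
  refine convexOn_of_deriv2_nonneg (convex_Icc 0 1)
    (fun s _ => ((hg s).continuousAt).continuousWithinAt)
    (fun s _ => ((hg s).differentiableAt).differentiableWithinAt)
    (by rw [hdg]; exact fun s _ => ((hg' s).differentiableAt).differentiableWithinAt)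
    ?_
  intro s hs
  rw [interior_Icc] at hs
  have hs' : s ∈ Set.Icc (0:ℝ) 1 := ⟨hs.1.le, hs.2.le⟩
  have h2 : deriv^[2] g s = -(1 / β) * (((∑ i, (-β * C + β ^ 2 * P i s ^ 2) * e i s) * S s
        - (∑ i, -β * P i s * e i s) * (∑ i, -β * P i s * e i s)) / S s ^ 2) := by
    show deriv (deriv g) s = _
    rw [hdg]; exact (hg' s).deriv
  rw [h2]
  -- now prove numerator nonpositive
  have key : (∑ i, (-β * C + β ^ 2 * P i s ^ 2) * e i s) * S s
      - (∑ i, -β * P i s * e i s) * (∑ i, -β * P i s * e i s) ≤ 0 := by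
    have hsq : 0 ≤ (∑ i, -β * P i s * e i s) * (∑ i, -β * P i s * e i s) :=
      mul_self_nonneg _
    have hSs : 0 < S s := hSpos s
    -- Chebyshev
    have cheb : (n : ℝ) * ∑ i, q i s * e i s ≤ (∑ i, q i s) * S s := by
      have hanti : AntivaryOn (fun i => q i s) (fun i => e i s) (univ : Finset (Fin n)) := by
        intro i _ j _ hij
        show q j s ≤ q i s
        have h1 : -(β/2) * q i s < -(β/2) * q j s := exp_lt_exp.mp hij
        refine le_of_lt ((mul_lt_mul_iff_right₀ (half_pos hβ)).mp ?_)
        linarith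
      simpa [hSdef, card_univ] using hanti.card_mul_sum_le_sum_mul_sum
    have hb : (1 / (n : ℝ)) * ∑ i, q i s < 1 / β := hbound s hs'
    have hnpos : (0:ℝ) < n := Nat.cast_pos.2 hn
    have hqe : ∑ i, q i s * e i s < (1 / β) * S s := by
      have h1 : (∑ i, q i s) < (n : ℝ) / β := by
        have h := mul_lt_mul_of_pos_left hb hnpos
        rw [← mul_assoc, mul_one_div, div_self hnpos.ne', one_mul, mul_one_div] at h
        exact h
      have h2 : (n:ℝ) * ∑ i, q i s * e i s < ((n:ℝ)/β) * S s :=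
        lt_of_le_of_lt cheb (mul_lt_mul_of_pos_right h1 hSs)
      have h3 : ((n:ℝ)/β) * S s = (n:ℝ) * ((1/β) * S s) := by ring
      rw [h3] at h2
      exact lt_of_mul_lt_mul_left h2 hnpos.le
    have hptsum : (∑ i, (-β * C + β ^ 2 * P i s ^ 2) * e i s)
        ≤ ∑ i, ((-β * C) * e i s + β ^ 2 * C * (q i s * e i s)) := by
      refine Finset.sum_le_sum fun i _ => ?_
      have hei : 0 < e i s := exp_pos _
      have h4 := mul_le_mul_of_nonneg_right (hCS i s) hei.le
      have h5 := mul_le_mul_of_nonneg_left h4 (sq_nonneg β)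
      show (-β * C + β ^ 2 * (B i + C * s) ^ 2) * e i s
        ≤ -β * C * e i s + β ^ 2 * C * ((A i + 2 * B i * s + C * s ^ 2) * e i s)
      nlinarith [h5]
    have hsplit : ∑ i, ((-β * C) * e i s + β ^ 2 * C * (q i s * e i s))
        = (-β * C) * S s + β ^ 2 * C * ∑ i, q i s * e i s := by
      rw [Finset.sum_add_distrib, ← Finset.mul_sum, ← Finset.mul_sum]
    have hS'' : (∑ i, (-β * C + β ^ 2 * P i s ^ 2) * e i s) ≤ 0 := by
      rw [hsplit] at hptsum
      have hmul : β ^ 2 * C * (∑ i, q i s * e i s) ≤ β ^ 2 * C * ((1/β) * S s) :=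
        mul_le_mul_of_nonneg_left hqe.le (by positivity)
      have : β ^ 2 * C * ((1/β) * S s) = β * C * S s := by field_simp
      nlinarith
    nlinarith [mul_nonpos_of_nonpos_of_nonneg hS'' hSs.le]
  have : ((∑ i, (-β * C + β ^ 2 * P i s ^ 2) * e i s) * S s
      - (∑ i, -β * P i s * e i s) * (∑ i, -β * P i s * e i s)) / S s ^ 2 ≤ 0 :=
    div_nonpos_of_nonpos_of_nonneg key (sq_nonneg _)
  have h6 : (0:ℝ) ≤ (1/β) * -(((∑ i, (-β * C + β ^ 2 * P i s ^ 2) * e i s) * S s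
      - (∑ i, -β * P i s * e i s) * (∑ i, -β * P i s * e i s)) / S s ^ 2) :=
    mul_nonneg (by positivity) (neg_nonneg.mpr this)
  linarith [h6]

/-- If 1/β > (1/n) Σᵢ |z−zᵢ|² on a convex open set Ω, then F(·,β) is convex on Ω. -/
theorem free_energy_convex
    {d n : ℕ} (zdata : Fin n → EuclideanSpace ℝ (Fin d)) (hn : 0 < n)
    (β : ℝ) (hβ : 0 < β)
    (F : EuclideanSpace ℝ (Fin d) → ℝ)
    (hF : ∀ z, F z = -(1 / β) * log (∑ i, exp (-(β / 2) * ‖z - zdata i‖ ^ 2)))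
    (Ω : Set (EuclideanSpace ℝ (Fin d))) (hΩconv : Convex ℝ Ω) (hΩopen : IsOpen Ω)
    (hbound : ∀ z ∈ Ω, 1 / β > (1 / (n : ℝ)) * ∑ i, ‖z - zdata i‖ ^ 2) :
    ConvexOn ℝ Ω F := by
  refine ⟨hΩconv, fun x hx y hy a b ha hb hab => ?_⟩
  set v : EuclideanSpace ℝ (Fin d) := y - x with hv
  set A : Fin n → ℝ := fun i => ‖x - zdata i‖ ^ 2 with hA
  set B : Fin n → ℝ := fun i => inner ℝ (x - zdata i) v with hB
  set C : ℝ := ‖v‖ ^ 2 with hCdef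
  have hpt : ∀ (s : ℝ) (i : Fin n),
      ‖(x + s • v) - zdata i‖ ^ 2 = A i + 2 * B i * s + C * s ^ 2 := by
    intro s i
    have h1 : (x + s • v) - zdata i = (x - zdata i) + s • v := by abel
    rw [h1, norm_add_sq_real, real_inner_smul_right, norm_smul]
    simp [hA, hB, hCdef, mul_pow]
    ring
  have hmem : ∀ s ∈ Set.Icc (0:ℝ) 1, x + s • v ∈ Ω := by
    intro s hs
    have h := hΩconv hx hy (by linarith [hs.2] : (0:ℝ) ≤ 1 - s) hs.1 (by ring)
    have : (1 - s) • x + s • y = x + s • v := by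
      rw [hv]; rw [smul_sub, sub_smul, one_smul]; abel
    rwa [this] at h
  have hCS : ∀ i s, (B i + C * s) ^ 2 ≤ C * (A i + 2 * B i * s + C * s ^ 2) := by
    intro i s
    have h1 : B i + C * s = inner ℝ ((x - zdata i) + s • v) v := by
      rw [inner_add_left, real_inner_smul_left, real_inner_self_eq_norm_sq]
      simp only [hB, hCdef]; ring
    have h2 : A i + 2 * B i * s + C * s ^ 2 = ‖(x - zdata i) + s • v‖ ^ 2 := by
      have := hpt s i
      have h1' : (x + s • v) - zdata i = (x - zdata i) + s • v := by abel
      rw [h1'] at this; linarith [this]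
    rw [h1, h2, hCdef]
    have := real_inner_mul_inner_self_le ((x - zdata i) + s • v) v
    rw [real_inner_self_eq_norm_sq, real_inner_self_eq_norm_sq] at this
    nlinarith [this]
  have hbound' : ∀ s ∈ Set.Icc (0:ℝ) 1,
      (1 / (n : ℝ)) * ∑ i, (A i + 2 * B i * s + C * s ^ 2) < 1 / β := by
    intro s hs
    have h := hbound _ (hmem s hs)
    have : ∑ i, (A i + 2 * B i * s + C * s ^ 2) = ∑ i, ‖(x + s • v) - zdata i‖ ^ 2 :=
      Finset.sum_congr rfl fun i _ => (hpt s i).symm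
    rw [this]; exact h
  have hcore := free_energy_core hn hβ A B C (by positivity) hCS hbound'
  have hgF : ∀ s : ℝ, F (x + s • v) =
      -(1 / β) * log (∑ i, exp (-(β / 2) * (A i + 2 * B i * s + C * s ^ 2))) := by
    intro s
    rw [hF]
    congr 1
    exact congrArg log (Finset.sum_congr rfl fun i _ => by rw [hpt s i])
  have h01 : (0:ℝ) ∈ Set.Icc (0:ℝ) 1 := by norm_num
  have h11 : (1:ℝ) ∈ Set.Icc (0:ℝ) 1 := by norm_num
  have hkey := hcore.2 h01 h11 ha hb hab
  have hsmul : a • (0:ℝ) + b • (1:ℝ) = b := by simp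
  rw [hsmul] at hkey
  have e0 : x + (0:ℝ) • v = x := by simp
  have e1 : x + (1:ℝ) • v = y := by rw [hv]; simp
  have eb : a • x + b • y = x + b • v := by
    have hab' : a = 1 - b := by linarith
    rw [hab', hv, smul_sub, sub_smul, one_smul]; abel
  calc F (a • x + b • y) = F (x + b • v) := by rw [eb]
    _ = -(1 / β) * log (∑ i, exp (-(β / 2) * (A i + 2 * B i * b + C * b ^ 2))) := hgF b
    _ ≤ a • (-(1 / β) * log (∑ i, exp (-(β / 2) * (A i + 2 * B i * 0 + C * 0 ^ 2))))
        + b • (-(1 / β) * log (∑ i, exp (-(β / 2) * (A i + 2 * B i * 1 + C * 1 ^ 2)))) := hkey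
    _ = a * F (x + (0:ℝ) • v) + b * F (x + (1:ℝ) • v) := by
        rw [hgF 0, hgF 1]; simp [hpt]
    _ = a • F x + b • F y := by rw [e0, e1]; simp
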